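/- For a finite graph G=(S,B), integers q ≥ 1, r ≥ 0 and β > 0, the (q,r)-Potts partition function Z_β(G) = Σ_{σ: S→{1,…,q+r}} exp(β · #{ {i,j} ∈ B : σ_i = σ_j ≤ q }) satisfies Z_β(G) = e^{β|B|} · Σ_{X⊆B} p^{|X|} (1-p)^{|B∖X|} (q+r)^{κ₀(S,X)} q^{κ₁(S,X)}, where p = 1 - e^{-β}. -/

import Mathlib

open scoped Classical

/-- number of isolated vertices of the graph `(V, X)`. -/
noncomputable def kappa0 {V : Type} [Fintype V] (X : Finset (Sym2 V)) : ℕ :=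
  Nat.card {v : V // ∀ e ∈ X, v ∉ e}

/-- number of connected components of `(V, X)` with at least two vertices. -/
noncomputable def kappa1 {V : Type} [Fintype V] (X : Finset (Sym2 V)) : ℕ :=
  Nat.card {c : (SimpleGraph.fromEdgeSet (X : Set (Sym2 V))).ConnectedComponent //
    1 < Nat.card c.supp}

section PottsAux

set_option linter.unusedSectionVars false

variable {V : Type} [Fintype V] {q r : ℕ} {X : Finset (Sym2 V)}

lemma reach_eq {σ : V → Fin (q + r)}
    (hσ : ∀ e ∈ X, ∀ i ∈ e, ∀ j ∈ e, σ i = σ j ∧ (σ i : ℕ) < q) {v w : V}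
    (h : (SimpleGraph.fromEdgeSet (X : Set (Sym2 V))).Reachable v w) : σ v = σ w := by
  obtain ⟨p⟩ := h
  induction p with
  | nil => rfl
  | cons h p ih =>
    rw [SimpleGraph.fromEdgeSet_adj] at h
    exact ((hσ _ h.1 _ (Sym2.mem_mk_left _ _) _ (Sym2.mem_mk_right _ _)).1).trans ih

lemma iso_of_reach {v w : V} (hv : ∀ e ∈ X, v ∉ e)
    (h : (SimpleGraph.fromEdgeSet (X : Set (Sym2 V))).Reachable v w) : v = w := by
  obtain ⟨p⟩ := h
  cases p with
  | nil => rfl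
  | cons h p =>
    rw [SimpleGraph.fromEdgeSet_adj] at h
    exact absurd (Sym2.mem_mk_left _ _) (hv _ h.1)

lemma touched_iff (hX : ∀ e ∈ X, ¬ e.IsDiag) (v : V) :
    (∃ e ∈ X, v ∈ e) ↔
      1 < Nat.card ((SimpleGraph.fromEdgeSet (X : Set (Sym2 V))).connectedComponentMk v).supp := by
  constructor
  · rintro ⟨e, he, hv⟩
    obtain ⟨w, rfl⟩ := Sym2.mem_iff_exists.mp hv
    have hvw : v ≠ w := by
      intro h; exact hX _ he (Sym2.mk_isDiag_iff.mpr h)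
    have adj : (SimpleGraph.fromEdgeSet (X : Set (Sym2 V))).Adj v w :=
      (SimpleGraph.fromEdgeSet_adj _).mpr ⟨he, hvw⟩
    rw [Finite.one_lt_card_iff_nontrivial]
    exact ⟨⟨v, rfl⟩, ⟨w, (SimpleGraph.ConnectedComponent.sound adj.symm.reachable)⟩,
      by simp [Subtype.ext_iff, hvw]⟩
  · intro h
    by_contra hno
    push_neg at hno
    have : ((SimpleGraph.fromEdgeSet (X : Set (Sym2 V))).connectedComponentMk v).supp = {v} := by
      ext w
      simp only [SimpleGraph.ConnectedComponent.mem_supp_iff, SimpleGraph.ConnectedComponent.eq,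
        Set.mem_singleton_iff]
      exact ⟨fun hr => (iso_of_reach hno hr.symm).symm, fun hw => hw ▸ SimpleGraph.Reachable.refl w⟩
    rw [this] at h
    simp [Nat.card_coe_set_eq] at h

lemma comp_eq_of_mem (hX : ∀ e ∈ X, ¬ e.IsDiag) {e : Sym2 V} (he : e ∈ X) {i j : V}
    (hi : i ∈ e) (hj : j ∈ e) :
    (SimpleGraph.fromEdgeSet (X : Set (Sym2 V))).connectedComponentMk i =
      (SimpleGraph.fromEdgeSet (X : Set (Sym2 V))).connectedComponentMk j := by
  obtain ⟨w, rfl⟩ := Sym2.mem_iff_exists.mp hi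
  rcases Sym2.mem_iff.mp hj with h | h
  · rw [h]
  · subst h
    have hij : i ≠ j := fun h => hX _ he (Sym2.mk_isDiag_iff.mpr h)
    exact SimpleGraph.ConnectedComponent.sound
      (((SimpleGraph.fromEdgeSet_adj _).mpr ⟨he, hij⟩).reachable)

noncomputable def potEquiv (hX : ∀ e ∈ X, ¬ e.IsDiag) :
    {σ : V → Fin (q + r) // ∀ e ∈ X, ∀ i ∈ e, ∀ j ∈ e, σ i = σ j ∧ (σ i : ℕ) < q} ≃
      ({c : (SimpleGraph.fromEdgeSet (X : Set (Sym2 V))).ConnectedComponent //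
          1 < Nat.card c.supp} → Fin q) ×
        ({v : V // ∀ e ∈ X, v ∉ e} → Fin (q + r)) where
  toFun σ :=
    (fun c => ⟨(σ.1 c.1.out : Fin (q + r)).val, by
        have hout : (SimpleGraph.fromEdgeSet (X : Set (Sym2 V))).connectedComponentMk
            c.1.out = c.1 := c.1.out_eq
        have hb : 1 < Nat.card ((SimpleGraph.fromEdgeSet (X : Set (Sym2 V))).connectedComponentMk
            c.1.out).supp := by rw [hout]; exact c.2
        obtain ⟨e, he, hm⟩ := (touched_iff hX _).mpr hb
        exact (σ.2 e he _ hm _ hm).2⟩,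
      fun v => σ.1 v.1)
  invFun gh := ⟨fun v =>
      if hv : ∀ e ∈ X, v ∉ e then gh.2 ⟨v, hv⟩
      else Fin.castAdd r (gh.1 ⟨(SimpleGraph.fromEdgeSet (X : Set (Sym2 V))).connectedComponentMk v,
        (touched_iff hX v).mp (by push_neg at hv; exact hv)⟩), by
    intro e he i hi j hj
    have hti : ¬ ∀ e ∈ X, i ∉ e := by push_neg; exact ⟨e, he, hi⟩
    have htj : ¬ ∀ e ∈ X, j ∉ e := by push_neg; exact ⟨e, he, hj⟩
    simp only [dif_neg hti, dif_neg htj]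
    constructor
    · exact congrArg _ (congrArg _ (Subtype.ext (comp_eq_of_mem hX he hi hj)))
    · simp⟩
  left_inv σ := by
    ext v
    by_cases hv : ∀ e ∈ X, v ∉ e
    · simp [dif_pos hv]
    · simp only [dif_neg hv]
      have hr : (SimpleGraph.fromEdgeSet (X : Set (Sym2 V))).Reachable
          ((SimpleGraph.fromEdgeSet (X : Set (Sym2 V))).connectedComponentMk v).out v :=
        SimpleGraph.ConnectedComponent.exact
          (((SimpleGraph.fromEdgeSet (X : Set (Sym2 V))).connectedComponentMk v).out_eq)
      have := reach_eq σ.2 hr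
      simp [this]
  right_inv := by
    rintro ⟨g, h⟩
    ext c
    · obtain ⟨c, hc⟩ := c
      have hout : (SimpleGraph.fromEdgeSet (X : Set (Sym2 V))).connectedComponentMk
          c.out = c := c.out_eq
      have hb : 1 < Nat.card ((SimpleGraph.fromEdgeSet (X : Set (Sym2 V))).connectedComponentMk
          c.out).supp := by rw [hout]; exact hc
      have hno : ¬ ∀ e ∈ X, c.out ∉ e := by
        have := (touched_iff hX _).mpr hb
        push_neg; exact this
      simp only [dif_neg hno, Fin.coe_castAdd]
      exact congrArg Fin.val (congrArg g (Subtype.ext hout))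
    · obtain ⟨v, hv⟩ := c
      simp [dif_pos hv]

lemma card_Pot (hX : ∀ e ∈ X, ¬ e.IsDiag) :
    Nat.card {σ : V → Fin (q + r) // ∀ e ∈ X, ∀ i ∈ e, ∀ j ∈ e, σ i = σ j ∧ (σ i : ℕ) < q} =
      (q + r) ^ kappa0 X * q ^ kappa1 X := by
  have hfq : Nat.card (Fin q) = q := by simp
  have hfqr : Nat.card (Fin (q + r)) = q + r := by simp
  rw [Nat.card_congr (potEquiv hX), Nat.card_prod, Nat.card_fun, Nat.card_fun, hfq, hfqr,
    mul_comm]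
  rfl

end PottsAux

/-- the (q,r)-Potts partition function equals
`e^{β|B|}` times the `r`-biased random-cluster partition function with
`p = 1 - e^{-β}`. -/
theorem stmt_1 (V : Type) [Fintype V] (B : Finset (Sym2 V)) (hB : ∀ e ∈ B, ¬ e.IsDiag)
    (q r : ℕ) (hq : 1 ≤ q) (β : ℝ) (hβ : 0 < β) (p : ℝ) (hp : p = 1 - Real.exp (-β)) :
    ∑ σ : V → Fin (q + r), Real.exp (β *
        (B.filter (fun e => ∀ i ∈ e, ∀ j ∈ e, σ i = σ j ∧ (σ i : ℕ) < q)).card) =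
      Real.exp (β * B.card) * ∑ X ∈ B.powerset,
        p ^ X.card * (1 - p) ^ (B \ X).card *
          (q + r : ℝ) ^ kappa0 X * (q : ℝ) ^ kappa1 X := by
  have hc : ∀ σ : V → Fin (q + r),
      Real.exp (β * (B.filter (fun e => ∀ i ∈ e, ∀ j ∈ e, σ i = σ j ∧ (σ i : ℕ) < q)).card) =
        ∑ X ∈ B.powerset,
          (if (∀ e ∈ X, ∀ i ∈ e, ∀ j ∈ e, σ i = σ j ∧ (σ i : ℕ) < q)
            then (Real.exp β - 1) ^ X.card else 0) := by
    intro σ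
    rw [mul_comm, Real.exp_nat_mul, ← Finset.prod_const, Finset.prod_filter]
    have hsplit : ∀ e ∈ B,
        (if (∀ i ∈ e, ∀ j ∈ e, σ i = σ j ∧ (σ i : ℕ) < q) then Real.exp β else 1) =
          ((if (∀ i ∈ e, ∀ j ∈ e, σ i = σ j ∧ (σ i : ℕ) < q) then Real.exp β - 1 else 0) + 1) := by
      intro e _; split_ifs <;> ring
    rw [Finset.prod_congr rfl hsplit, Finset.prod_add]
    refine Finset.sum_congr rfl fun Y hY => ?_
    rw [Finset.prod_const_one, mul_one]
    by_cases h : ∀ e ∈ Y, ∀ i ∈ e, ∀ j ∈ e, σ i = σ j ∧ (σ i : ℕ) < q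
    · rw [if_pos h, Finset.prod_congr rfl (fun e he => if_pos (h e he)), Finset.prod_const]
    · rw [if_neg h]
      obtain ⟨e, hne⟩ := not_forall.mp h
      obtain ⟨he, hne⟩ := Classical.not_imp.mp hne
      exact Finset.prod_eq_zero he (if_neg hne)
  rw [Finset.sum_congr rfl fun σ _ => hc σ, Finset.sum_comm, Finset.mul_sum]
  refine Finset.sum_congr rfl fun Y hY => ?_
  have hYB : Y ⊆ B := Finset.mem_powerset.mp hY
  have hYd : ∀ e ∈ Y, ¬ e.IsDiag := fun e he => hB e (hYB he)
  rw [← Finset.sum_filter, Finset.sum_const, nsmul_eq_mul]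
  have hcard : (Finset.univ.filter
      (fun σ : V → Fin (q + r) => ∀ e ∈ Y, ∀ i ∈ e, ∀ j ∈ e, σ i = σ j ∧ (σ i : ℕ) < q)).card =
      (q + r) ^ kappa0 Y * q ^ kappa1 Y := by
    rw [← Fintype.card_subtype, ← Nat.card_eq_fintype_card]
    exact card_Pot hYd
  rw [hcard]
  have h1 : (1 : ℝ) - p = Real.exp (-β) := by rw [hp]; ring
  have h2 : (B \ Y).card = B.card - Y.card := Finset.card_sdiff_of_subset hYB
  have h3 : Real.exp (β * B.card) = Real.exp β ^ B.card := by rw [mul_comm, Real.exp_nat_mul]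
  have h5 : Real.exp β ^ B.card = Real.exp β ^ Y.card * Real.exp β ^ (B.card - Y.card) := by
    rw [← pow_add, Nat.add_sub_cancel' (Finset.card_le_card hYB)]
  have h6 : Real.exp β ^ (B.card - Y.card) * Real.exp (-β) ^ (B.card - Y.card) = 1 := by
    rw [← mul_pow, ← Real.exp_add, add_neg_cancel, Real.exp_zero, one_pow]
  have h7 : Real.exp β - 1 = p * Real.exp β := by
    rw [hp, sub_mul, one_mul, ← Real.exp_add, neg_add_cancel, Real.exp_zero]
  rw [h7, h1, h2, h3, h5, mul_pow]
  push_cast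
  linear_combination (-(p ^ Y.card * Real.exp β ^ Y.card * ((q : ℝ) + r) ^ kappa0 Y *
    (q : ℝ) ^ kappa1 Y)) * h6
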